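/- Let (X, ρ) be a nonempty compact metric space and let T : X → X be a continuous, open, distance-expanding map. Then T has a periodic point in X, i.e., there exist z ∈ X and an integer n ≥ 1 with T^n(z) = z. -/

import Mathlib

open Filter Metric Topology

/-- Uniform local surjectivity for a continuous open map on a compact metric space. -/
lemma aux_exists_xi {X : Type*} [MetricSpace X] [CompactSpace X] (S : X → X)
    (hc : Continuous S) (ho : IsOpenMap S) (η : ℝ) (hη : 0 < η) :
    ∃ ξ > (0:ℝ), ∀ x z : X, dist (S x) z < ξ → ∃ y, dist x y ≤ η ∧ S y = z := by
  by_contra h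
  push_neg at h
  have h' : ∀ n : ℕ, ∃ x z : X, dist (S x) z < 1/(n+1) ∧
      ∀ y, dist x y ≤ η → S y ≠ z := by
    intro n
    obtain ⟨x, z, h1, h2⟩ := h (1/(n+1)) (by positivity)
    exact ⟨x, z, h1, h2⟩
  choose x z hxz hbad using h'
  obtain ⟨x₀, -, φ, hφ, hlim⟩ := isCompact_univ.tendsto_subseq (fun n => Set.mem_univ (x n))
  have hSx : Tendsto (fun n => S (x (φ n))) atTop (𝓝 (S x₀)) := (hc.tendsto x₀).comp hlim
  have hz : Tendsto (fun n => z (φ n)) atTop (𝓝 (S x₀)) := by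
    rw [tendsto_iff_dist_tendsto_zero]
    apply squeeze_zero (fun n => dist_nonneg)
      (g := fun n => 1/(n+1) + dist (S (x (φ n))) (S x₀))
    · intro n
      calc dist (z (φ n)) (S x₀) ≤ dist (z (φ n)) (S (x (φ n))) + dist (S (x (φ n))) (S x₀) :=
            dist_triangle _ _ _
        _ ≤ 1/(n+1) + dist (S (x (φ n))) (S x₀) := by
            have h1 : dist (z (φ n)) (S (x (φ n))) < 1/(φ n + 1) := by
              rw [dist_comm]; exact hxz (φ n)
            have h2 : (1:ℝ)/(φ n + 1) ≤ 1/(n+1) := by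
              apply one_div_le_one_div_of_le (by positivity)
              have h3 : n ≤ φ n := hφ.le_apply
              have h4 : (n:ℝ) ≤ (φ n : ℝ) := by exact_mod_cast h3
              linarith
            linarith
    · have : Tendsto (fun n : ℕ => 1 / ((n : ℝ) + 1)) atTop (𝓝 0) := tendsto_one_div_add_atTop_nhds_zero_nat
      simpa using this.add (tendsto_iff_dist_tendsto_zero.mp hSx)
  have hU : IsOpen (S '' ball x₀ (η/2)) := ho _ isOpen_ball
  have hmem : S x₀ ∈ S '' ball x₀ (η/2) := ⟨x₀, mem_ball_self (half_pos hη), rfl⟩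
  have ev1 : ∀ᶠ n in atTop, z (φ n) ∈ S '' ball x₀ (η/2) :=
    hz.eventually (eventually_of_mem (hU.mem_nhds hmem) (fun y hy => hy))
  have ev2 : ∀ᶠ n in atTop, dist (x (φ n)) x₀ < η/2 :=
    (tendsto_iff_dist_tendsto_zero.mp hlim).eventually_lt_const (half_pos hη) |>.mono (fun n h => h)
  obtain ⟨n, hn1, hn2⟩ := (ev1.and ev2).exists
  obtain ⟨y, hy1, hy2⟩ := hn1
  apply hbad (φ n) y _ hy2
  have : dist (x (φ n)) y ≤ dist (x (φ n)) x₀ + dist x₀ y := dist_triangle _ _ _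
  rw [mem_ball, dist_comm] at hy1
  linarith

/-- Iterated inverse branch: pull back a target along an orbit, contracting by `l^m`. -/
lemma aux_pullback {X : Type*} [MetricSpace X] (S : X → X) (l ξ : ℝ) (hl : 1 < l) (hξ : 0 < ξ)
    (hP : ∀ x z : X, dist (S x) z < ξ → ∃ y, S y = z ∧ l * dist x y ≤ dist (S x) z) :
    ∀ m : ℕ, ∀ x z : X, dist (S^[m] x) z < ξ →
      ∃ y, S^[m] y = z ∧ l^m * dist x y ≤ dist (S^[m] x) z := by
  intro m
  induction m with
  | zero => intro x z h; exact ⟨z, rfl, by simpa using le_refl (dist x z)⟩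
  | succ m ih =>
    intro x z h
    rw [Function.iterate_succ_apply'] at h
    obtain ⟨y₁, hy₁, hd₁⟩ := hP (S^[m] x) z h
    have hl0 : (0:ℝ) < l := lt_trans one_pos hl
    have hd₁' : dist (S^[m] x) y₁ < ξ := by
      nlinarith [dist_nonneg (x := S^[m] x) (y := y₁)]
    obtain ⟨y, hy, hd⟩ := ih x y₁ hd₁'
    refine ⟨y, by rw [Function.iterate_succ_apply', hy, hy₁], ?_⟩
    rw [Function.iterate_succ_apply']
    have hlm : (0:ℝ) < l^m := pow_pos hl0 m
    calc l^(m+1) * dist x y = l * (l^m * dist x y) := by ring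
      _ ≤ l * dist (S^[m] x) y₁ := by nlinarith
      _ ≤ dist (S (S^[m] x)) z := hd₁

lemma aux_isOpenMap_iterate {X : Type*} [TopologicalSpace X] (f : X → X)
    (hf : IsOpenMap f) : ∀ n : ℕ, IsOpenMap (f^[n])
  | 0 => IsOpenMap.id
  | (n+1) => by
      rw [Function.iterate_succ']
      exact hf.comp (aux_isOpenMap_iterate f hf n)

/-- A map `T` on a metric space is *distance-expanding* if there exist `λ > 1`, `η > 0`
and `N ≥ 0` such that points at distance at most `η` have their `N`-th iterates at
distance at least `λ` times the original distance. -/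
def DistanceExpanding {X : Type*} [MetricSpace X] (T : X → X) : Prop :=
  ∃ (l : ℝ) (η : ℝ) (N : ℕ), 1 < l ∧ 0 < η ∧
    ∀ x y : X, dist x y ≤ η → l * dist x y ≤ dist (T^[N] x) (T^[N] y)

theorem stmt1 {X : Type*} [MetricSpace X] [CompactSpace X] [Nonempty X] (T : X → X)
    (hcont : Continuous T) (hopen : IsOpenMap T) (hexp : DistanceExpanding T) :
    ∃ (z : X) (n : ℕ), 1 ≤ n ∧ T^[n] z = z := by
  obtain ⟨l, η, N, hl, hη, hexp⟩ := hexp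
  -- WLOG the exponent is at least 1
  obtain ⟨N₁, hN₁, hexp₁⟩ : ∃ N₁ : ℕ, 1 ≤ N₁ ∧
      ∀ x y : X, dist x y ≤ η → l * dist x y ≤ dist (T^[N₁] x) (T^[N₁] y) := by
    rcases Nat.eq_zero_or_pos N with hN | hN
    · refine ⟨1, le_refl 1, fun x y hxy => ?_⟩
      have h0 := hexp x y hxy
      rw [hN] at h0
      simp only [Function.iterate_zero_apply] at h0
      have : dist x y = 0 := by nlinarith [dist_nonneg (x := x) (y := y)]
      rw [this]
      simpa using dist_nonneg
    · exact ⟨N, hN, hexp⟩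
  set S := T^[N₁] with hS
  have hcS : Continuous S := hcont.iterate N₁
  have hoS : IsOpenMap S := aux_isOpenMap_iterate T hopen N₁
  have hl0 : (0:ℝ) < l := lt_trans one_pos hl
  obtain ⟨ξ, hξ, hxi⟩ := aux_exists_xi S hcS hoS η hη
  -- combined: preimage with contraction
  have hP : ∀ x z : X, dist (S x) z < ξ → ∃ y, S y = z ∧ l * dist x y ≤ dist (S x) z := by
    intro x z h
    obtain ⟨y, hy1, hy2⟩ := hxi x z h
    exact ⟨y, hy2, hy2 ▸ hexp₁ x y hy1⟩
  have hC := aux_pullback S l ξ hl hξ hP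
  -- find an almost-periodic point
  obtain ⟨b, m, hm, hb⟩ : ∃ (b : X) (m : ℕ), 1 ≤ m ∧ dist (S^[m] b) b < ξ := by
    have a : X := Classical.arbitrary X
    obtain ⟨x₀, -, φ, hφ, hlim⟩ := isCompact_univ.tendsto_subseq
      (fun n => Set.mem_univ (S^[n] a))
    have := Metric.tendsto_atTop.mp hlim (ξ/2) (half_pos hξ)
    obtain ⟨K, hK⟩ := this
    refine ⟨S^[φ K] a, φ (K+1) - φ K, ?_, ?_⟩
    · have : φ K < φ (K+1) := hφ (by omega)
      omega
    · have he : S^[φ (K+1) - φ K] (S^[φ K] a) = S^[φ (K+1)] a := by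
        rw [← Function.iterate_add_apply]
        congr 1
        have : φ K < φ (K+1) := hφ (by omega)
        omega
      rw [he]
      have h1 := hK K (le_refl K)
      have h2 := hK (K+1) (Nat.le_succ K)
      calc dist (S^[φ (K+1)] a) (S^[φ K] a)
          ≤ dist (S^[φ (K+1)] a) x₀ + dist (S^[φ K] a) x₀ := dist_triangle_right _ _ _
        _ < ξ/2 + ξ/2 := by exact add_lt_add h2 h1
        _ = ξ := add_halves ξ
  -- Banach-style iteration of inverse branches of S^[m]
  have hlm : (1:ℝ) < l^m := one_lt_pow₀ hl (by omega)
  have hle : l ≤ l^m := le_self_pow₀ hl.le (by omega)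
  have hstep : ∀ p : {x : X // dist (S^[m] x) x < ξ},
      ∃ q : {x : X // dist (S^[m] x) x < ξ},
        S^[m] q.val = p.val ∧ l * dist (S^[m] q.val) q.val ≤ dist (S^[m] p.val) p.val := by
    rintro ⟨p, hp⟩
    obtain ⟨y, hy1, hy2⟩ := hC m p p hp
    have hd : dist (S^[m] y) y = dist p y := by rw [hy1]
    have hy3 : l * dist (S^[m] y) y ≤ dist (S^[m] p) p := by
      rw [hd]; nlinarith [dist_nonneg (x := p) (y := y), hle]
    have hq : dist (S^[m] y) y < ξ := by nlinarith [dist_nonneg (x := S^[m] y) (y := y)]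
    exact ⟨⟨y, hq⟩, hy1, hy3⟩
  choose Φ hΦ1 hΦ2 using hstep
  set v : ℕ → {x : X // dist (S^[m] x) x < ξ} := fun k => Φ^[k] ⟨b, hb⟩ with hv
  have hv_succ : ∀ k, v (k+1) = Φ (v k) := fun k => Function.iterate_succ_apply' Φ k _
  set D : ℕ → ℝ := fun k => dist (S^[m] (v k).val) (v k).val with hD
  have hDstep : ∀ k, l * D (k+1) ≤ D k := by
    intro k; rw [hD]; simp only; rw [hv_succ]; exact hΦ2 (v k)
  have hDgeo : ∀ k, D k ≤ D 0 * (1/l)^k := by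
    intro k
    induction k with
    | zero => simp
    | succ k ih =>
      have h1 := hDstep k
      have e : D 0 * (1/l)^(k+1) = (D 0 * (1/l)^k) / l := by rw [pow_succ]; ring
      rw [e, le_div_iff₀ hl0]
      nlinarith
  have hDnn : ∀ k, 0 ≤ D k := fun k => dist_nonneg
  have hdist : ∀ k, dist ((v k).val) ((v (k+1)).val) ≤ D 0 * (1/l)^k := by
    intro k
    have h1 : S^[m] ((v (k+1)).val) = (v k).val := by rw [hv_succ]; exact hΦ1 (v k)
    have h2 : dist ((v k).val) ((v (k+1)).val) = D (k+1) := by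
      rw [hD]; simp only; rw [h1]
    rw [h2]
    calc D (k+1) ≤ D 0 * (1/l)^(k+1) := hDgeo (k+1)
      _ ≤ D 0 * (1/l)^k := by
          have hp : ((1:ℝ)/l)^(k+1) ≤ (1/l)^k :=
            pow_le_pow_of_le_one (by positivity) (by rw [div_le_one hl0]; linarith) (Nat.le_succ k)
          exact mul_le_mul_of_nonneg_left hp (hDnn 0)
  have hcauchy : CauchySeq (fun k => (v k).val) :=
    cauchySeq_of_le_geometric (1/l) (D 0) (by rw [div_lt_one hl0]; linarith) hdist
  obtain ⟨z, hz⟩ := cauchySeq_tendsto_of_complete hcauchy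
  refine ⟨z, N₁ * m, Nat.one_le_iff_ne_zero.mpr (by positivity), ?_⟩
  have hiter : T^[N₁ * m] = S^[m] := Function.iterate_mul T N₁ m
  rw [hiter]
  have h1 : Tendsto (fun k => S^[m] ((v (k+1)).val)) atTop (𝓝 (S^[m] z)) :=
    ((hcS.iterate m).tendsto z).comp (hz.comp (tendsto_add_atTop_nat 1))
  have h2 : Tendsto (fun k => S^[m] ((v (k+1)).val)) atTop (𝓝 z) := by
    have : (fun k => S^[m] ((v (k+1)).val)) = fun k => (v k).val := by
      funext k; rw [hv_succ]; exact hΦ1 (v k)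
    rw [this]; exact hz
  exact tendsto_nhds_unique h1 h2
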